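/- Let n ≥ 1 and let J be a 2n×2n complex Hermitian matrix that is tridiagonal with all diagonal entries equal to 0 and all superdiagonal (hence subdiagonal) entries of modulus 1. Then J has exactly n positive eigenvalues and exactly n negative eigenvalues, counted with multiplicity; in particular J is invertible and the Hermitian form u ↦ u*·J·u on ℂ^{2n} has signature (n,n). -/

import Mathlib

open Polynomial Matrix Finset in
private lemma my_det_sub {m : ℕ} (A : Matrix (Fin m) (Fin m) ℂ) (hA : A.IsHermitian) (x : ℂ) :
    (x • (1 : Matrix (Fin m) (Fin m) ℂ) - A).det = ∏ i, (x - (hA.eigenvalues i : ℂ)) := by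
  set U : Matrix (Fin m) (Fin m) ℂ := (hA.eigenvectorUnitary : Matrix (Fin m) (Fin m) ℂ) with hUdef
  have hU : U * star U = 1 := Matrix.mem_unitaryGroup_iff.mp hA.eigenvectorUnitary.2
  have key : x • (1 : Matrix (Fin m) (Fin m) ℂ) - A
      = U * (x • 1 - diagonal (RCLike.ofReal ∘ hA.eigenvalues)) * star U := by
    rw [Matrix.mul_sub, Matrix.sub_mul]
    congr 1
    · rw [Matrix.mul_smul, Matrix.smul_mul, Matrix.mul_one, hU]
    · exact hA.spectral_theorem
  rw [key, det_mul, det_mul, mul_right_comm, ← det_mul, hU, det_one, one_mul,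
    smul_one_eq_diagonal, diagonal_sub, det_diagonal]
  rfl

open Polynomial Matrix Finset in
private lemma my_sym (n : ℕ)
    (J : Matrix (Fin (2 * n)) (Fin (2 * n)) ℂ) (hJ : J.IsHermitian)
    (hdiag : ∀ i, J i i = 0)
    (htri : ∀ i j : Fin (2 * n), (i : ℕ) + 1 < (j : ℕ) → J i j = 0) :
    (Finset.univ.val.map hJ.eigenvalues)
      = (Finset.univ.val.map hJ.eigenvalues).map (fun x => -x) := by
  set lam := hJ.eigenvalues with hlam
  set D : Matrix (Fin (2 * n)) (Fin (2 * n)) ℂ :=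
    diagonal (fun i : Fin (2 * n) => ((-1 : ℂ)) ^ (i : ℕ)) with hD
  have hpow : ∀ k : ℕ, ((-1 : ℂ)) ^ k * ((-1 : ℂ)) ^ k = 1 := by
    intro k
    rw [← pow_add]
    exact Even.neg_one_pow ⟨k, by ring⟩
  have hDD : D * D = 1 := by
    rw [hD, diagonal_mul_diagonal]
    have : (fun i : Fin (2*n) => (-1:ℂ)^(i:ℕ) * (-1)^(i:ℕ)) = fun _ => 1 := funext fun i => hpow i
    rw [this, diagonal_one]
  have hlow : ∀ i j : Fin (2 * n), (j : ℕ) + 1 < (i : ℕ) → J i j = 0 := by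
    intro i j h
    rw [← hJ.apply i j, htri j i h, star_zero]
  have hDJD : D * J * D = -J := by
    ext i j
    rw [hD]
    simp only [diagonal_mul, mul_diagonal, Matrix.neg_apply]
    rcases lt_trichotomy ((i : ℕ) + 1) (j : ℕ) with h | h | h
    · rw [htri i j h]; ring
    · -- j = i+1
      have : (-1 : ℂ) ^ (i : ℕ) * ((-1 : ℂ) ^ (j : ℕ)) = -1 := by
        rw [← pow_add, ← h]
        exact Odd.neg_one_pow ⟨i, by ring⟩
      calc (-1:ℂ) ^ (i:ℕ) * J i j * (-1) ^ (j:ℕ)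
          = ((-1:ℂ) ^ (i:ℕ) * ((-1:ℂ) ^ (j:ℕ))) * J i j := by ring
        _ = -J i j := by rw [this]; ring
    · rcases lt_trichotomy ((j : ℕ) + 1) (i : ℕ) with h' | h' | h'
      · rw [hlow i j h']; ring
      · have : (-1 : ℂ) ^ (i : ℕ) * ((-1 : ℂ) ^ (j : ℕ)) = -1 := by
          rw [← pow_add, show (i:ℕ) + (j:ℕ) = 2 * (j:ℕ) + 1 by omega]
          exact Odd.neg_one_pow ⟨(j:ℕ), by ring⟩
        calc (-1:ℂ) ^ (i:ℕ) * J i j * (-1) ^ (j:ℕ)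
            = ((-1:ℂ) ^ (i:ℕ) * ((-1:ℂ) ^ (j:ℕ))) * J i j := by ring
          _ = -J i j := by rw [this]; ring
      · have : i = j := Fin.ext (by omega)
        subst this
        rw [hdiag i]; ring
  have hdet : ∀ x : ℂ, ∏ i, (x - (lam i : ℂ)) = ∏ i, (x - (-(lam i) : ℂ)) := by
    intro x
    have h1 : D * (x • (1 : Matrix (Fin (2*n)) (Fin (2*n)) ℂ) - J) * D
        = x • (1 : Matrix (Fin (2*n)) (Fin (2*n)) ℂ) + J := by
      rw [Matrix.mul_sub, Matrix.sub_mul, hDJD, Matrix.mul_smul, Matrix.smul_mul, Matrix.mul_one,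
        hDD, sub_neg_eq_add]
    have h2 : (x • (1 : Matrix (Fin (2*n)) (Fin (2*n)) ℂ) - J).det
        = (x • (1 : Matrix (Fin (2*n)) (Fin (2*n)) ℂ) + J).det := by
      conv_rhs => rw [← h1]
      rw [det_mul, det_mul, mul_right_comm, ← det_mul, hDD, det_one, one_mul]
    have h3 : ((-x) • (1 : Matrix (Fin (2*n)) (Fin (2*n)) ℂ) - J)
        = -(x • (1 : Matrix (Fin (2*n)) (Fin (2*n)) ℂ) + J) := by
      rw [neg_smul, neg_add]
      abel
    have h4 : ((-x) • (1 : Matrix (Fin (2*n)) (Fin (2*n)) ℂ) - J).det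
        = (x • (1 : Matrix (Fin (2*n)) (Fin (2*n)) ℂ) + J).det := by
      rw [h3, det_neg, Fintype.card_fin]
      rw [Even.neg_one_pow ⟨n, by ring⟩, one_mul]
    have hA : ∏ i, (x - (lam i : ℂ)) = ∏ i, (-x - (lam i : ℂ)) := by
      rw [← my_det_sub J hJ x, ← my_det_sub J hJ (-x), h2, h4]
    calc ∏ i, (x - (lam i : ℂ)) = ∏ i, (-x - (lam i : ℂ)) := hA
      _ = ∏ i, ((-1) * (x - (-(lam i) : ℂ))) := Finset.prod_congr rfl (fun i _ => by ring)
      _ = ∏ i, (x - (-(lam i) : ℂ)) := by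
          rw [Finset.prod_mul_distrib, Finset.prod_const, Finset.card_univ, Fintype.card_fin,
            Even.neg_one_pow ⟨n, by ring⟩, one_mul]
  -- polynomial equality
  have hpoly : (∏ i, (X - C ((lam i : ℂ)))) = ∏ i, (X - C ((-(lam i) : ℂ))) := by
    apply Polynomial.funext
    intro x
    simp only [eval_prod, eval_sub, eval_X, eval_C]
    exact hdet x
  have hroots := congrArg Polynomial.roots hpoly
  have hconv : ∀ f : Fin (2*n) → ℂ,
      (∏ i, (X - C (f i))).roots = Finset.univ.val.map f := by
    intro f
    rw [Finset.prod_eq_multiset_prod]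
    rw [show Finset.univ.val.map (fun i => X - C (f i))
        = (Finset.univ.val.map f).map (fun a => X - C a) by
      rw [Multiset.map_map]; rfl]
    exact roots_multiset_prod_X_sub_C _
  rw [hconv, hconv] at hroots
  have hinj := Multiset.map_injective (α := ℝ) (β := ℂ) Complex.ofReal_injective
  have e1 : Multiset.map (fun i => ((lam i : ℝ) : ℂ)) Finset.univ.val
      = Multiset.map Complex.ofReal (Multiset.map lam Finset.univ.val) := by
    rw [Multiset.map_map]
    exact Multiset.map_congr rfl (fun i _ => rfl)
  have e2 : Multiset.map (fun i => (-(lam i) : ℂ)) Finset.univ.val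
      = Multiset.map Complex.ofReal (Multiset.map (fun x => -x) (Multiset.map lam Finset.univ.val)) := by
    rw [Multiset.map_map, Multiset.map_map]
    exact Multiset.map_congr rfl (fun i _ => by simp)
  exact hinj (e1.symm.trans (hroots.trans e2))


open Matrix Finset in
private lemma my_det_ne (n : ℕ) (hn : 1 ≤ n)
    (J : Matrix (Fin (2 * n)) (Fin (2 * n)) ℂ) (hJ : J.IsHermitian)
    (hdiag : ∀ i, J i i = 0)
    (htri : ∀ i j : Fin (2 * n), (i : ℕ) + 1 < (j : ℕ) → J i j = 0)
    (hsup : ∀ i j : Fin (2 * n), (j : ℕ) = (i : ℕ) + 1 → ‖J i j‖ = 1) :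
    J.det ≠ 0 := by
  intro h0
  obtain ⟨v, hv0, hv⟩ := Matrix.exists_mulVec_eq_zero_iff.mpr h0
  apply hv0
  have hlow : ∀ i j : Fin (2 * n), (j : ℕ) + 1 < (i : ℕ) → J i j = 0 := fun i j h => by
    rw [← hJ.apply i j, htri j i h, star_zero]
  have hne : ∀ i j : Fin (2 * n), ((j : ℕ) = (i : ℕ) + 1 ∨ (i : ℕ) = (j : ℕ) + 1) → J i j ≠ 0 := by
    intro i j h
    rcases h with h | h
    · intro hz; have := hsup i j h; rw [hz] at this; simpa using this
    · intro hz
      have h2 : J j i = 0 := by rw [← hJ.apply j i, hz, star_zero]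
      have := hsup j i h; rw [h2] at this; simpa using this
  have row : ∀ i : Fin (2 * n), ∑ j ∈ Finset.univ.filter
      (fun j : Fin (2 * n) => (j : ℕ) + 1 = (i : ℕ) ∨ (j : ℕ) = (i : ℕ) + 1),
        J i j * v j = 0 := by
    intro i
    rw [Finset.sum_filter_of_ne]
    · have := congrFun hv i
      simpa [Matrix.mulVec, dotProduct] using this
    · intro j _ hjne
      have hJne : J i j ≠ 0 := fun hz => hjne (by rw [hz, zero_mul])
      by_contra hc
      push_neg at hc
      obtain ⟨hc1, hc2⟩ := hc
      have h3 : (j : ℕ) + 1 < (i : ℕ) ∨ (i : ℕ) + 1 < (j : ℕ) ∨ (j : ℕ) = (i : ℕ) := by omega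
      rcases h3 with h | h | h
      · exact hJne (hlow i j h)
      · exact hJne (htri i j h)
      · have : j = i := Fin.ext h
        rw [this] at hJne; exact hJne (hdiag i)
  have hodd : ∀ k, ∀ h : 2 * k + 1 < 2 * n, v ⟨2 * k + 1, h⟩ = 0 := by
    intro k
    induction k with
    | zero =>
      intro h
      have h0' : (0 : ℕ) < 2 * n := by omega
      have hr := row ⟨0, h0'⟩
      have hfil : Finset.univ.filter
          (fun j : Fin (2 * n) => (j : ℕ) + 1 = ((⟨0, h0'⟩ : Fin (2 * n)) : ℕ)
            ∨ (j : ℕ) = ((⟨0, h0'⟩ : Fin (2 * n)) : ℕ) + 1) = {⟨1, by omega⟩} := by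
        ext j
        have := j.isLt
        simp only [Finset.mem_filter, Finset.mem_univ, true_and, Finset.mem_singleton,
          Fin.ext_iff, Fin.val_mk]
        omega
      rw [hfil, Finset.sum_singleton] at hr
      have hnz := hne ⟨0, h0'⟩ ⟨1, by omega⟩ (Or.inl (by simp))
      have hv1 := (mul_eq_zero.mp hr).resolve_left hnz
      have : (⟨2 * 0 + 1, h⟩ : Fin (2 * n)) = ⟨1, by omega⟩ := Fin.ext (by norm_num)
      rw [this]; exact hv1
    | succ k ih =>
      intro h
      have hi : 2 * k + 2 < 2 * n := by omega
      have hr := row ⟨2 * k + 2, hi⟩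
      have hfil : Finset.univ.filter
          (fun j : Fin (2 * n) => (j : ℕ) + 1 = ((⟨2 * k + 2, hi⟩ : Fin (2 * n)) : ℕ)
            ∨ (j : ℕ) = ((⟨2 * k + 2, hi⟩ : Fin (2 * n)) : ℕ) + 1)
          = {⟨2 * k + 1, by omega⟩, ⟨2 * k + 3, by omega⟩} := by
        ext j
        have := j.isLt
        simp only [Finset.mem_filter, Finset.mem_univ, true_and, Finset.mem_insert,
          Finset.mem_singleton, Fin.ext_iff, Fin.val_mk]
        omega
      rw [hfil, Finset.sum_pair (by simp [Fin.ext_iff])] at hr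
      have h1 : v ⟨2 * k + 1, by omega⟩ = 0 := ih (by omega)
      rw [h1, mul_zero, zero_add] at hr
      have hnz := hne ⟨2 * k + 2, hi⟩ ⟨2 * k + 3, by omega⟩ (Or.inl (by simp))
      have hv1 := (mul_eq_zero.mp hr).resolve_left hnz
      have : (⟨2 * (k + 1) + 1, h⟩ : Fin (2 * n)) = ⟨2 * k + 3, by omega⟩ := Fin.ext (by show 2*(k+1)+1 = 2*k+3; omega)
      rw [this]; exact hv1
  have heven : ∀ d k, k + d + 1 = n → ∀ h2 : 2 * k < 2 * n, v ⟨2 * k, h2⟩ = 0 := by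
    intro d
    induction d with
    | zero =>
      intro k hk h2
      have hi : 2 * k + 1 < 2 * n := by omega
      have hr := row ⟨2 * k + 1, hi⟩
      have hfil : Finset.univ.filter
          (fun j : Fin (2 * n) => (j : ℕ) + 1 = ((⟨2 * k + 1, hi⟩ : Fin (2 * n)) : ℕ)
            ∨ (j : ℕ) = ((⟨2 * k + 1, hi⟩ : Fin (2 * n)) : ℕ) + 1)
          = {⟨2 * k, by omega⟩} := by
        ext j
        have := j.isLt
        simp only [Finset.mem_filter, Finset.mem_univ, true_and, Finset.mem_singleton,
          Fin.ext_iff, Fin.val_mk]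
        omega
      rw [hfil, Finset.sum_singleton] at hr
      have hnz := hne ⟨2 * k + 1, hi⟩ ⟨2 * k, by omega⟩ (Or.inr (by simp))
      exact (mul_eq_zero.mp hr).resolve_left hnz
    | succ d ihd =>
      intro k hk h2
      have hi : 2 * k + 1 < 2 * n := by omega
      have hr := row ⟨2 * k + 1, hi⟩
      have hfil : Finset.univ.filter
          (fun j : Fin (2 * n) => (j : ℕ) + 1 = ((⟨2 * k + 1, hi⟩ : Fin (2 * n)) : ℕ)
            ∨ (j : ℕ) = ((⟨2 * k + 1, hi⟩ : Fin (2 * n)) : ℕ) + 1)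
          = {⟨2 * k, by omega⟩, ⟨2 * k + 2, by omega⟩} := by
        ext j
        have := j.isLt
        simp only [Finset.mem_filter, Finset.mem_univ, true_and, Finset.mem_insert,
          Finset.mem_singleton, Fin.ext_iff, Fin.val_mk]
        omega
      rw [hfil, Finset.sum_pair (by simp [Fin.ext_iff])] at hr
      have h1 : v ⟨2 * k + 2, by omega⟩ = 0 := by
        have := ihd (k + 1) (by omega) (by omega)
        have he : (⟨2 * (k + 1), by omega⟩ : Fin (2 * n)) = ⟨2 * k + 2, by omega⟩ :=
          Fin.ext (by show 2*(k+1) = 2*k+2; omega)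
        rw [he] at this; exact this
      rw [h1, mul_zero, add_zero] at hr
      have hnz := hne ⟨2 * k + 1, hi⟩ ⟨2 * k, by omega⟩ (Or.inr (by simp))
      exact (mul_eq_zero.mp hr).resolve_left hnz
  funext i
  simp only [Pi.zero_apply]
  have hlt := i.isLt
  rcases Nat.even_or_odd (i : ℕ) with ⟨k, hk⟩ | ⟨k, hk⟩
  · have h2 : 2 * k < 2 * n := by omega
    have := heven (n - k - 1) k (by omega) h2
    have hieq : i = ⟨2 * k, h2⟩ := Fin.ext (by show (i:ℕ) = 2*k; omega)
    rw [hieq]; exact this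
  · have h2 : 2 * k + 1 < 2 * n := by omega
    have := hodd k h2
    have hieq : i = ⟨2 * k + 1, h2⟩ := Fin.ext (by show (i:ℕ) = 2*k+1; omega)
    rw [hieq]; exact this




/-- a `2n × 2n` Hermitian tridiagonal matrix with zero diagonal and
unit-modulus superdiagonal entries has exactly `n` positive and `n` negative
eigenvalues (counted with multiplicity); in particular it is invertible, i.e. the
associated Hermitian form has signature `(n, n)`. -/
theorem stmt_13 (n : ℕ) (hn : 1 ≤ n)
    (J : Matrix (Fin (2 * n)) (Fin (2 * n)) ℂ) (hJ : J.IsHermitian)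
    (hdiag : ∀ i, J i i = 0)
    (htri : ∀ i j : Fin (2 * n), (i : ℕ) + 1 < (j : ℕ) → J i j = 0)
    (hsup : ∀ i j : Fin (2 * n), (j : ℕ) = (i : ℕ) + 1 → ‖J i j‖ = 1) :
    {i : Fin (2 * n) | 0 < hJ.eigenvalues i}.ncard = n ∧
    {i : Fin (2 * n) | hJ.eigenvalues i < 0}.ncard = n ∧
    J.det ≠ 0 := by
  have hdet := my_det_ne n hn J hJ hdiag htri hsup
  have hsym := my_sym n J hJ hdiag htri
  set lam := hJ.eigenvalues with hlam
  set S : Multiset ℝ := Finset.univ.val.map lam with hS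
  have hzero : ∀ i, lam i ≠ 0 := by
    intro i hzi
    apply hdet
    rw [hJ.det_eq_prod_eigenvalues]
    exact Finset.prod_eq_zero (Finset.mem_univ i) (by rw [← hlam, hzi]; simp)
  have hcard : Multiset.card S = 2 * n := by
    rw [hS, Multiset.card_map]; simp
  have hposneg : (S.filter (fun x => 0 < x)).card = (S.filter (fun x => x < 0)).card := by
    conv_lhs => rw [hsym]
    rw [Multiset.filter_map, Multiset.card_map]
    congr 1
    apply Multiset.filter_congr
    intro x _
    exact neg_pos
  have hsplit : (S.filter (fun x => 0 < x)).card + (S.filter (fun x => x < 0)).card = 2 * n := by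
    have h1 : S.filter (fun x => ¬ 0 < x) = S.filter (fun x => x < 0) := by
      apply Multiset.filter_congr
      intro x hx
      have hxne : x ≠ 0 := by
        rw [hS] at hx
        obtain ⟨i, _, rfl⟩ := Multiset.mem_map.mp hx
        exact hzero i
      exact ⟨fun h => (not_lt.mp h).lt_of_ne hxne, fun h => not_lt.mpr h.le⟩
    rw [← h1, ← Multiset.card_add, Multiset.filter_add_not, hcard]
  have key : ∀ (p : ℝ → Prop) [DecidablePred p],
      {i : Fin (2 * n) | p (lam i)}.ncard = (S.filter p).card := by
    intro p _
    rw [hS, Multiset.filter_map, Multiset.card_map, ← Finset.filter_val]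
    rw [show Multiset.card (Finset.univ.filter (p ∘ lam)).val
      = (Finset.univ.filter (p ∘ lam)).card from rfl]
    rw [← Set.ncard_coe_finset]
    congr 1
    ext i
    simp [Function.comp]
  have k1 := key (fun x => 0 < x)
  have k2 := key (fun x => x < 0)
  refine ⟨?_, ?_, hdet⟩
  · rw [k1]; omega
  · rw [k2]; omega
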